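/- Let Λ = ⊕_{g∈G} Λ_g be a strongly G-graded ring with identity component Δ. Define Inn_Δ(H) = {h ∈ H : Λ_h ≅ Δ as Δ-bimodules} for a subgroup H ≤ G. Then for any g ∈ G and any subgroup H ≤ G, Inn_Δ(g⁻¹Hg) = g⁻¹ Inn_Δ(H) g. -/

import Mathlib

open Pointwise
/-- A strong grading of the ring `Λ` by the group `G`: `Λ` is the internal direct
sum of the additive subgroups `A g`, and `A g * A h = A (g * h)` for all `g, h`. -/
structure IsStrongGrading {G Λ : Type*} [Group G] [Ring Λ] [DecidableEq G]
    (A : G → AddSubgroup Λ) : Prop where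
  internal : DirectSum.IsInternal A
  one_mem : (1 : Λ) ∈ A 1
  mul_mem : ∀ (g h : G), ∀ a ∈ A g, ∀ b ∈ A h, a * b ∈ A (g * h)
  strong : ∀ g h : G, A (g * h) ≤ AddSubgroup.closure ((A g : Set Λ) * (A h : Set Λ))

/-- `Λ_g ≅ Λ_h` as `Δ`-bimodules (`Δ = Λ_1`): an additive equivalence compatible
with left and right multiplication by elements of the identity component. -/
def ComponentBimodIso {G Λ : Type*} [Group G] [Ring Λ]
    (A : G → AddSubgroup Λ) (g h : G) : Prop :=
  ∃ f : A g ≃+ A h,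
    (∀ d ∈ A (1 : G), ∀ x y : A g, (y : Λ) = d * (x : Λ) → ((f y : Λ) = d * (f x : Λ))) ∧
    (∀ d ∈ A (1 : G), ∀ x y : A g, (y : Λ) = (x : Λ) * d → ((f y : Λ) = (f x : Λ) * d))

section Aux

variable {G Λ : Type*} [Group G] [Ring Λ] [DecidableEq G]

private lemma list_sum_neg (L : List Λ) : (L.map (fun x => -x)).sum = -L.sum := by
  induction L with
  | nil => simp
  | cons a l ih => simp [ih, neg_add, add_comm]

/-- Extract a finite "dual basis" from the strong grading condition:
`∑ i, s i * t i = 1` with `s i ∈ A g⁻¹` and `t i ∈ A g`. -/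
private lemma exists_dual (A : G → AddSubgroup Λ) (hA : IsStrongGrading A) (g : G) :
    ∃ (n : ℕ) (s t : Fin n → Λ), (∀ i, s i ∈ A g⁻¹) ∧ (∀ i, t i ∈ A g) ∧
      (∑ i, s i * t i) = 1 := by
  classical
  have h1 : (1 : Λ) ∈ A (g⁻¹ * g) := by rw [inv_mul_cancel]; exact hA.one_mem
  have h2 : (1 : Λ) ∈ AddSubgroup.closure ((A g⁻¹ : Set Λ) * (A g : Set Λ)) :=
    hA.strong g⁻¹ g h1
  have key : ∃ L : List (Λ × Λ), (∀ p ∈ L, p.1 ∈ A g⁻¹ ∧ p.2 ∈ A g) ∧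
      (L.map fun p => p.1 * p.2).sum = (1 : Λ) := by
    refine AddSubgroup.closure_induction (p := fun x _ => ∃ L : List (Λ × Λ),
      (∀ p ∈ L, p.1 ∈ A g⁻¹ ∧ p.2 ∈ A g) ∧ (L.map fun p => p.1 * p.2).sum = x)
      ?_ ?_ ?_ ?_ h2
    · rintro x hx
      rw [Set.mem_mul] at hx
      obtain ⟨a, ha, b, hb, rfl⟩ := hx
      refine ⟨[(a, b)], ?_, by simp⟩
      intro p hp
      rw [List.mem_singleton] at hp
      subst hp
      exact ⟨ha, hb⟩
    · exact ⟨[], by simp, by simp⟩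
    · rintro x y _ _ ⟨L1, hL1, hs1⟩ ⟨L2, hL2, hs2⟩
      refine ⟨L1 ++ L2, ?_, ?_⟩
      · intro p hp
        rcases List.mem_append.1 hp with h | h
        · exact hL1 p h
        · exact hL2 p h
      · rw [List.map_append, List.sum_append, hs1, hs2]
    · rintro x _ ⟨L, hL, hsum⟩
      refine ⟨L.map (fun p => (-p.1, p.2)), ?_, ?_⟩
      · intro p hp
        obtain ⟨q, hq, rfl⟩ := List.mem_map.1 hp
        exact ⟨neg_mem (hL q hq).1, (hL q hq).2⟩
      · rw [List.map_map]
        have : ((fun p : Λ × Λ => p.1 * p.2) ∘ fun p : Λ × Λ => (-p.1, p.2))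
            = (fun x => -x) ∘ (fun p : Λ × Λ => p.1 * p.2) := by
          funext p; simp [neg_mul]
        rw [this, ← List.map_map, list_sum_neg, hsum]
  obtain ⟨L, hL, hsum⟩ := key
  refine ⟨L.length, fun i => (L[i.1]).1, fun i => (L[i.1]).2, ?_, ?_, ?_⟩
  · intro i; exact (hL _ (List.getElem_mem _)).1
  · intro i; exact (hL _ (List.getElem_mem _)).2
  · rw [← hsum]
    exact Fin.sum_univ_fun_getElem L (fun p => p.1 * p.2)

private lemma map_sum_of (B : AddSubgroup Λ) (φ : Λ → Λ)
    (hzero : φ 0 = 0)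
    (hadd : ∀ z w, z ∈ B → w ∈ B → φ (z + w) = φ z + φ w)
    {ι : Type*} (S : Finset ι) (u : ι → Λ) (hu : ∀ i ∈ S, u i ∈ B) :
    φ (∑ i ∈ S, u i) = ∑ i ∈ S, φ (u i) := by
  classical
  induction S using Finset.induction_on with
  | empty => simpa
  | @insert a S ha ih =>
    rw [Finset.sum_insert ha, Finset.sum_insert ha,
      hadd _ _ (hu _ (Finset.mem_insert_self _ _))
        (AddSubgroup.sum_mem _ fun i hi => hu _ (Finset.mem_insert_of_mem hi)),
      ih fun i hi => hu _ (Finset.mem_insert_of_mem hi)]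

/-- The key step: being isomorphic to `Δ` is preserved under conjugation of the
grading degree. -/
private lemma conj_iso (A : G → AddSubgroup Λ) (hA : IsStrongGrading A) (g k : G)
    (hk : ComponentBimodIso A k 1) : ComponentBimodIso A (g⁻¹ * k * g) 1 := by
  classical
  obtain ⟨f, hfl, hfr⟩ := hk
  obtain ⟨n, s, t, hs, ht, hst⟩ := exists_dual A hA g
  have hcast : ∀ {a b : G}, a = b → ∀ {x : Λ}, x ∈ A a → x ∈ A b := by
    rintro a b rfl x hx; exact hx
  have hm : ∀ {a b : G} {x y : Λ}, x ∈ A a → y ∈ A b → x * y ∈ A (a * b) :=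
    fun hx hy => hA.mul_mem _ _ _ hx _ hy
  -- the underlying maps on Λ
  set fe : Λ → Λ := fun z => if h : z ∈ A k then ((f ⟨z, h⟩ : A (1 : G)) : Λ) else 0
    with hfe_def
  set ge : Λ → Λ := fun z => if h : z ∈ A (1 : G) then ((f.symm ⟨z, h⟩ : A k) : Λ) else 0
    with hge_def
  have fe_def : ∀ z (h : z ∈ A k), fe z = ((f ⟨z, h⟩ : A (1 : G)) : Λ) := by
    intro z h; rw [hfe_def]; exact dif_pos h
  have ge_def : ∀ z (h : z ∈ A (1 : G)), ge z = ((f.symm ⟨z, h⟩ : A k) : Λ) := by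
    intro z h; rw [hge_def]; exact dif_pos h
  have fe_mem : ∀ {z}, z ∈ A k → fe z ∈ A (1 : G) := by
    intro z h; rw [fe_def z h]; exact (f ⟨z, h⟩).2
  have ge_mem : ∀ {z}, z ∈ A (1 : G) → ge z ∈ A k := by
    intro z h; rw [ge_def z h]; exact (f.symm ⟨z, h⟩).2
  have fe_zero : fe 0 = 0 := by
    rw [fe_def 0 (zero_mem _)]
    have : (⟨(0 : Λ), zero_mem _⟩ : A k) = 0 := rfl
    rw [this, map_zero]; rfl
  have ge_zero : ge 0 = 0 := by
    rw [ge_def 0 (zero_mem _)]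
    have : (⟨(0 : Λ), zero_mem _⟩ : A (1 : G)) = 0 := rfl
    rw [this, map_zero]; rfl
  have fe_add : ∀ z w, z ∈ A k → w ∈ A k → fe (z + w) = fe z + fe w := by
    intro z w hz hw
    rw [fe_def _ (add_mem hz hw), fe_def _ hz, fe_def _ hw]
    have : (⟨z + w, add_mem hz hw⟩ : A k) = ⟨z, hz⟩ + ⟨w, hw⟩ := rfl
    rw [this, map_add]; rfl
  have ge_add : ∀ z w, z ∈ A (1 : G) → w ∈ A (1 : G) → ge (z + w) = ge z + ge w := by
    intro z w hz hw
    rw [ge_def _ (add_mem hz hw), ge_def _ hz, ge_def _ hw]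
    have : (⟨z + w, add_mem hz hw⟩ : A (1 : G)) = ⟨z, hz⟩ + ⟨w, hw⟩ := rfl
    rw [this, map_add]; rfl
  have fe_left : ∀ d z, d ∈ A (1 : G) → z ∈ A k → fe (d * z) = d * fe z := by
    intro d z hd hz
    have hdz : d * z ∈ A k := hcast (one_mul k) (hm hd hz)
    rw [fe_def _ hdz, fe_def _ hz]
    exact hfl d hd ⟨z, hz⟩ ⟨d * z, hdz⟩ rfl
  have fe_right : ∀ d z, d ∈ A (1 : G) → z ∈ A k → fe (z * d) = fe z * d := by
    intro d z hd hz
    have hdz : z * d ∈ A k := hcast (mul_one k) (hm hz hd)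
    rw [fe_def _ hdz, fe_def _ hz]
    exact hfr d hd ⟨z, hz⟩ ⟨z * d, hdz⟩ rfl
  have fe_inj : ∀ z w, z ∈ A k → w ∈ A k → fe z = fe w → z = w := by
    intro z w hz hw h
    rw [fe_def _ hz, fe_def _ hw] at h
    have := f.injective (Subtype.ext h)
    exact congrArg Subtype.val this
  have ge_fe : ∀ z, (h : z ∈ A k) → ge (fe z) = z := by
    intro z h
    rw [ge_def _ (fe_mem h)]
    rw [show (⟨fe z, fe_mem h⟩ : A (1 : G)) = f ⟨z, h⟩ from Subtype.ext (fe_def z h),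
      AddEquiv.symm_apply_apply]
  have fe_ge : ∀ z, (h : z ∈ A (1 : G)) → fe (ge z) = z := by
    intro z h
    rw [fe_def _ (ge_mem h)]
    rw [show (⟨ge z, ge_mem h⟩ : A k) = f.symm ⟨z, h⟩ from Subtype.ext (ge_def z h),
      AddEquiv.apply_symm_apply]
  have ge_left : ∀ d z, d ∈ A (1 : G) → z ∈ A (1 : G) → ge (d * z) = d * ge z := by
    intro d z hd hz
    have h1 : d * z ∈ A (1 : G) := hcast (one_mul (1 : G)) (hm hd hz)
    have h2 : d * ge z ∈ A k := hcast (one_mul k) (hm hd (ge_mem hz))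
    refine fe_inj _ _ (ge_mem h1) h2 ?_
    rw [fe_ge _ h1, fe_left d _ hd (ge_mem hz), fe_ge _ hz]
  have ge_right : ∀ d z, d ∈ A (1 : G) → z ∈ A (1 : G) → ge (z * d) = ge z * d := by
    intro d z hd hz
    have h1 : z * d ∈ A (1 : G) := hcast (mul_one (1 : G)) (hm hz hd)
    have h2 : ge z * d ∈ A k := hcast (mul_one k) (hm (ge_mem hz) hd)
    refine fe_inj _ _ (ge_mem h1) h2 ?_
    rw [fe_ge _ h1, fe_right d _ hd (ge_mem hz), fe_ge _ hz]
  -- summation helpers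
  have key2 : ∀ b : Λ, (∑ p, s p * (t p * b)) = b := by
    intro b
    have : ∀ p ∈ Finset.univ, s p * (t p * b) = (s p * t p) * b :=
      fun p _ => (mul_assoc _ _ _).symm
    rw [Finset.sum_congr rfl this, ← Finset.sum_mul, hst, one_mul]
  -- the two maps
  set Fm : Λ → Λ := fun y => ∑ i, ∑ j, s i * fe (t i * (y * s j)) * t j with hFm
  set Gm : Λ → Λ := fun d => ∑ i, ∑ j, s i * ge (t i * (d * s j)) * t j with hGm
  -- memberships of the relevant products
  have hts : ∀ (i j : Fin n) {y : Λ}, y ∈ A (g⁻¹ * k * g) → t i * (y * s j) ∈ A k := by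
    intro i j y hy
    exact hcast (by group) (hm (ht i) (hm hy (hs j)))
  have hts1 : ∀ (i j : Fin n) {d : Λ}, d ∈ A (1 : G) → t i * (d * s j) ∈ A (1 : G) := by
    intro i j d hd
    exact hcast (by group) (hm (ht i) (hm hd (hs j)))
  have hFmem : ∀ {y}, y ∈ A (g⁻¹ * k * g) → Fm y ∈ A (1 : G) := by
    intro y hy
    rw [hFm]
    refine AddSubgroup.sum_mem _ fun i _ => AddSubgroup.sum_mem _ fun j _ => ?_
    exact hcast (by group) (hm (hm (hs i) (fe_mem (hts i j hy))) (ht j))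
  have hGmem : ∀ {d}, d ∈ A (1 : G) → Gm d ∈ A (g⁻¹ * k * g) := by
    intro d hd
    rw [hGm]
    refine AddSubgroup.sum_mem _ fun i _ => AddSubgroup.sum_mem _ fun j _ => ?_
    exact hm (hm (hs i) (ge_mem (hts1 i j hd))) (ht j)
  -- additivity
  have hFadd : ∀ y z, y ∈ A (g⁻¹ * k * g) → z ∈ A (g⁻¹ * k * g) →
      Fm (y + z) = Fm y + Fm z := by
    intro y z hy hz
    rw [hFm]
    simp only []
    rw [← Finset.sum_add_distrib]
    refine Finset.sum_congr rfl fun i _ => ?_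
    rw [← Finset.sum_add_distrib]
    refine Finset.sum_congr rfl fun j _ => ?_
    have : t i * ((y + z) * s j) = t i * (y * s j) + t i * (z * s j) := by
      rw [add_mul, mul_add]
    rw [this, fe_add _ _ (hts i j hy) (hts i j hz), mul_add, add_mul]
  -- Fm is left Δ-linear
  have hFsmul : ∀ d y, d ∈ A (1 : G) → y ∈ A (g⁻¹ * k * g) → Fm (d * y) = d * Fm y := by
    intro d y hd hy
    have harg : ∀ i j : Fin n, fe (t i * (d * y * s j))
        = ∑ m, (t i * (d * s m)) * fe (t m * (y * s j)) := by
      intro i j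
      have h1 : t i * (d * y * s j) = ∑ m, (t i * (d * s m)) * (t m * (y * s j)) := by
        have h2 : ∀ m ∈ Finset.univ, (t i * (d * s m)) * (t m * (y * s j))
            = (t i * d) * (s m * (t m * (y * s j))) := fun m _ => by
          simp only [mul_assoc]
        rw [Finset.sum_congr rfl h2, ← Finset.mul_sum, key2]
        simp only [mul_assoc]
      rw [h1, map_sum_of (A k) fe fe_zero fe_add _ _
        (fun m _ => hcast (one_mul k) (hm (hts1 i m hd) (hts m j hy)))]
      exact Finset.sum_congr rfl fun m _ =>
        fe_left _ _ (hts1 i m hd) (hts m j hy)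
    rw [hFm]
    simp only []
    calc (∑ i, ∑ j, s i * fe (t i * (d * y * s j)) * t j)
        = ∑ i, ∑ j, ∑ m, s i * (t i * (d * (s m * (fe (t m * (y * s j)) * t j)))) := by
          refine Finset.sum_congr rfl fun i _ => Finset.sum_congr rfl fun j _ => ?_
          rw [harg i j, Finset.mul_sum, Finset.sum_mul]
          exact Finset.sum_congr rfl fun m _ => by simp only [mul_assoc]
      _ = ∑ j, ∑ m, ∑ i, s i * (t i * (d * (s m * (fe (t m * (y * s j)) * t j)))) := by
          rw [Finset.sum_comm]
          exact Finset.sum_congr rfl fun j _ => Finset.sum_comm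
      _ = ∑ j, ∑ m, d * (s m * (fe (t m * (y * s j)) * t j)) := by
          exact Finset.sum_congr rfl fun j _ => Finset.sum_congr rfl fun m _ => key2 _
      _ = d * ∑ i, ∑ j, s i * fe (t i * (y * s j)) * t j := by
          rw [Finset.mul_sum, Finset.sum_comm]
          refine Finset.sum_congr rfl fun j _ => ?_
          rw [Finset.mul_sum]
          exact Finset.sum_congr rfl fun m _ => by simp only [mul_assoc]
  -- Fm is right Δ-linear
  have hFsmulr : ∀ d y, d ∈ A (1 : G) → y ∈ A (g⁻¹ * k * g) → Fm (y * d) = Fm y * d := by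
    intro d y hd hy
    have harg : ∀ i j : Fin n, fe (t i * (y * d * s j))
        = ∑ m, fe (t i * (y * s m)) * (t m * (d * s j)) := by
      intro i j
      have h1 : t i * (y * d * s j) = ∑ m, (t i * (y * s m)) * (t m * (d * s j)) := by
        have h2 : ∀ m ∈ Finset.univ, (t i * (y * s m)) * (t m * (d * s j))
            = (t i * y) * (s m * (t m * (d * s j))) := fun m _ => by
          simp only [mul_assoc]
        rw [Finset.sum_congr rfl h2, ← Finset.mul_sum, key2]
        simp only [mul_assoc]
      rw [h1, map_sum_of (A k) fe fe_zero fe_add _ _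
        (fun m _ => hcast (mul_one k) (hm (hts i m hy) (hts1 m j hd)))]
      exact Finset.sum_congr rfl fun m _ =>
        fe_right _ _ (hts1 m j hd) (hts i m hy)
    rw [hFm]
    simp only []
    calc (∑ i, ∑ j, s i * fe (t i * (y * d * s j)) * t j)
        = ∑ i, ∑ m, ∑ j, s i * (fe (t i * (y * s m)) * (t m * (d * (s j * t j)))) := by
          refine Finset.sum_congr rfl fun i _ => ?_
          have e1 : ∀ j ∈ Finset.univ, s i * fe (t i * (y * d * s j)) * t j
              = ∑ m, s i * (fe (t i * (y * s m)) * (t m * (d * (s j * t j)))) := by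
            intro j _
            rw [harg i j, Finset.mul_sum, Finset.sum_mul]
            exact Finset.sum_congr rfl fun m _ => by simp only [mul_assoc]
          rw [Finset.sum_congr rfl e1, Finset.sum_comm]
      _ = ∑ i, ∑ m, s i * (fe (t i * (y * s m)) * (t m * d)) := by
          refine Finset.sum_congr rfl fun i _ => Finset.sum_congr rfl fun m _ => ?_
          simp only [← Finset.mul_sum]
          rw [hst, mul_one]
      _ = (∑ i, ∑ j, s i * fe (t i * (y * s j)) * t j) * d := by
          rw [Finset.sum_mul]
          refine Finset.sum_congr rfl fun i _ => ?_
          rw [Finset.sum_mul]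
          exact Finset.sum_congr rfl fun m _ => by simp only [mul_assoc]
  -- Gm ∘ Fm = id
  have hGF : ∀ y, y ∈ A (g⁻¹ * k * g) → Gm (Fm y) = y := by
    intro y hy
    have hgearg : ∀ i j : Fin n, ge (t i * (Fm y * s j)) = t i * (y * s j) := by
      intro i j
      have h1 : t i * (Fm y * s j)
          = ∑ m, ∑ p, (t i * s m) * (fe (t m * (y * s p)) * (t p * s j)) := by
        rw [hFm]
        simp only [Finset.mul_sum, Finset.sum_mul, mul_assoc]
      have hmem : ∀ m p : Fin n,
          (t i * s m) * (fe (t m * (y * s p)) * (t p * s j)) ∈ A (1 : G) := by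
        intro m p
        exact hcast (by group)
          (hm (hm (ht i) (hs m)) (hm (fe_mem (hts m p hy)) (hm (ht p) (hs j))))
      rw [h1, map_sum_of (A (1 : G)) ge ge_zero ge_add _ _
        (fun m _ => AddSubgroup.sum_mem _ fun p _ => hmem m p)]
      have e2 : ∀ m ∈ Finset.univ, ge (∑ p, (t i * s m) * (fe (t m * (y * s p)) * (t p * s j)))
          = ∑ p, (t i * s m) * ((t m * (y * s p)) * (t p * s j)) := by
        intro m _
        rw [map_sum_of (A (1 : G)) ge ge_zero ge_add _ _ (fun p _ => hmem m p)]
        refine Finset.sum_congr rfl fun p _ => ?_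
        have ha : t i * s m ∈ A (1 : G) := hcast (by group) (hm (ht i) (hs m))
        have hb : t p * s j ∈ A (1 : G) := hcast (by group) (hm (ht p) (hs j))
        have hc : fe (t m * (y * s p)) * (t p * s j) ∈ A (1 : G) :=
          hcast (by group) (hm (fe_mem (hts m p hy)) hb)
        rw [ge_left _ _ ha hc, ge_right _ _ hb (fe_mem (hts m p hy)),
          ge_fe _ (hts m p hy)]
      rw [Finset.sum_congr rfl e2]
      simp only [mul_assoc, ← Finset.mul_sum, key2]
    rw [hGm]
    simp only []
    rw [Finset.sum_congr rfl fun i _ => Finset.sum_congr rfl fun j _ => by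
      rw [hgearg i j]]
    simp only [mul_assoc, ← Finset.mul_sum, hst, mul_one, key2]
  -- Fm ∘ Gm = id
  have hFG : ∀ d, d ∈ A (1 : G) → Fm (Gm d) = d := by
    intro d hd
    have hfearg : ∀ i j : Fin n, fe (t i * (Gm d * s j)) = t i * (d * s j) := by
      intro i j
      have h1 : t i * (Gm d * s j)
          = ∑ m, ∑ p, (t i * s m) * (ge (t m * (d * s p)) * (t p * s j)) := by
        rw [hGm]
        simp only [Finset.mul_sum, Finset.sum_mul, mul_assoc]
      have hmem : ∀ m p : Fin n,
          (t i * s m) * (ge (t m * (d * s p)) * (t p * s j)) ∈ A k := by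
        intro m p
        exact hcast (by group)
          (hm (hm (ht i) (hs m)) (hm (ge_mem (hts1 m p hd)) (hm (ht p) (hs j))))
      rw [h1, map_sum_of (A k) fe fe_zero fe_add _ _
        (fun m _ => AddSubgroup.sum_mem _ fun p _ => hmem m p)]
      have e2 : ∀ m ∈ Finset.univ, fe (∑ p, (t i * s m) * (ge (t m * (d * s p)) * (t p * s j)))
          = ∑ p, (t i * s m) * ((t m * (d * s p)) * (t p * s j)) := by
        intro m _
        rw [map_sum_of (A k) fe fe_zero fe_add _ _ (fun p _ => hmem m p)]
        refine Finset.sum_congr rfl fun p _ => ?_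
        have ha : t i * s m ∈ A (1 : G) := hcast (by group) (hm (ht i) (hs m))
        have hb : t p * s j ∈ A (1 : G) := hcast (by group) (hm (ht p) (hs j))
        have hc : ge (t m * (d * s p)) * (t p * s j) ∈ A k :=
          hcast (by group) (hm (ge_mem (hts1 m p hd)) hb)
        rw [fe_left _ _ ha hc, fe_right _ _ hb (ge_mem (hts1 m p hd)),
          fe_ge _ (hts1 m p hd)]
      rw [Finset.sum_congr rfl e2]
      simp only [mul_assoc, ← Finset.mul_sum, key2]
    rw [hFm]
    simp only []
    rw [Finset.sum_congr rfl fun i _ => Finset.sum_congr rfl fun j _ => by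
      rw [hfearg i j]]
    simp only [mul_assoc, ← Finset.mul_sum, hst, mul_one, key2]
  -- assemble the additive equivalence
  refine ⟨{ toFun := fun y => ⟨Fm y, hFmem y.2⟩
            invFun := fun d => ⟨Gm d, hGmem d.2⟩
            left_inv := fun y => Subtype.ext (hGF y y.2)
            right_inv := fun d => Subtype.ext (hFG d d.2)
            map_add' := fun y z => Subtype.ext (hFadd y z y.2 z.2) }, ?_, ?_⟩
  · intro d hd x y hxy
    show Fm (y : Λ) = d * Fm (x : Λ)
    rw [hxy]
    exact hFsmul d x hd x.2
  · intro d hd x y hxy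
    show Fm (y : Λ) = Fm (x : Λ) * d
    rw [hxy]
    exact hFsmulr d x hd x.2
end Aux

/-- For a strongly `G`-graded ring with identity component `Δ`,
`Inn_Δ(g⁻¹Hg) = g⁻¹ Inn_Δ(H) g`, where `Inn_Δ(H) = {h ∈ H : Λ_h ≅ Δ as Δ-bimodules}`. -/
theorem inn_conj {G Λ : Type*} [Group G] [Ring Λ] [DecidableEq G]
    (A : G → AddSubgroup Λ) (hA : IsStrongGrading A) (g : G) (H : Subgroup G) :
    {x : G | x ∈ (fun y => g⁻¹ * y * g) '' (H : Set G) ∧ ComponentBimodIso A x 1}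
      = (fun y => g⁻¹ * y * g) '' {x : G | x ∈ H ∧ ComponentBimodIso A x 1} := by
  ext x
  simp only [Set.mem_setOf_eq, Set.mem_image, SetLike.mem_coe]
  constructor
  · rintro ⟨⟨h, hh, rfl⟩, hiso⟩
    refine ⟨h, ⟨hh, ?_⟩, rfl⟩
    have := conj_iso A hA g⁻¹ (g⁻¹ * h * g) hiso
    have heq : (g⁻¹)⁻¹ * (g⁻¹ * h * g) * g⁻¹ = h := by group
    rwa [heq] at this
  · rintro ⟨h, ⟨hh, hiso⟩, rfl⟩
    exact ⟨⟨h, hh, rfl⟩, conj_iso A hA g h hiso⟩
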